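/- Let G be a group, C an abelian normal subgroup of G, B = G/C, and let g ↦ ḡ denote the canonical epimorphism G → B. Then there exists a right ZB-module D and an injective group homomorphism λ from G into the group M(G) of 2×2 matrices of the form [[b, 0], [d, 1]] with b in B and d in D (that is, the semidirect product D ⋊ B with B acting on D by the module action), with gλ = [[ḡ, 0], [d(g), 1]], such that: (1) D is generated as a ZB-module by the elements d(g), g in G; (2) the map d(g) ↦ ḡ − 1 extends to an epimorphism of ZB-modules σ: D → (B−1)·ZB onto the fundamental (augmentation) ideal of ZB viewed as a ZB-module; (3) ker σ = d(C). -/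

import Mathlib

/-!
STATEMENT 8 (Lemma, matrix splittings): Let `G` be a group, `C` an abelian normal
subgroup of `G`, `B = G/C`. Then there is a right `ℤB`-module `D` and an injective
homomorphism `λ : G → M(G) = [[B, 0], [D, 1]]`, `λ g = [[ḡ, 0], [d g, 1]]`, such that
(1) `D` is generated by the `d g`, `g ∈ G`; (2) `d g ↦ ḡ − 1` extends to a `ℤB`-module
epimorphism `σ : D → (B−1)·ℤB` onto the fundamental ideal; (3) `ker σ = d(C)`.
A homomorphism into `M(G)` is precisely a 1-cocycle `d`, and injectivity of `λ` is
injectivity of `g ↦ (ḡ, d g)`; right modules are left modules over the opposite ring.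
-/

/-- The elements of the abelian normal subgroup `C` are torsion-free under the natural
right `ℤ[G/C]`-module structure given by conjugation, expressed elementwise: a nonzero
group-ring element (representatives `h j` of pairwise distinct cosets mod `C`, integer
coefficients `m j`, not all zero) applied to `c ∈ C` is trivial only if `c` is. -/
def ConjTorsionFree {G : Type*} [Group G] (C : Subgroup G) : Prop :=
  ∀ c ∈ C, ∀ (k : ℕ) (h : Fin k → G) (m : Fin k → ℤ),
    (∀ j l : Fin k, j ≠ l → (h j)⁻¹ * h l ∉ C) → (∃ j, m j ≠ 0) →
    (List.ofFn fun j => ((h j)⁻¹ * c * h j) ^ m j).prod = 1 → c = 1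

/-- `(d, σ)` is a matrix splitting of `G` over `C` with `B = G/C`: the right
`ℤB`-module `D` (a left module over `(ℤB)ᵐᵒᵖ`) together with the injective homomorphism
`λ : g ↦ [[ḡ, 0], [d g, 1]]` into the matrix group `[[B, 0], [D, 1]]`. Injectivity of
`λ` is injectivity of `g ↦ (ḡ, d g)`, and `λ` being a homomorphism is the cocycle
identity `d (g h) = d g • h̄ + d h`. Moreover (1) `D` is generated by the `d g`;
(2) `σ` is a module epimorphism of `D` onto the fundamental (augmentation) ideal
`(B−1)·ℤB = {x | Σ coefficients of x = 0}` with `σ (d g) = ḡ − 1`; (3) `ker σ = d(C)`. -/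
def IsMatrixSplitting {G : Type*} [Group G] (C : Subgroup G) [C.Normal]
    {D : Type*} [AddCommGroup D] [Module (MonoidAlgebra ℤ (G ⧸ C))ᵐᵒᵖ D]
    (d : G → D)
    (σ : D →ₗ[(MonoidAlgebra ℤ (G ⧸ C))ᵐᵒᵖ] MonoidAlgebra ℤ (G ⧸ C)) : Prop :=
  Function.Injective (fun g : G => ((g : G ⧸ C), d g)) ∧
  (∀ g h : G, d (g * h) =
    MulOpposite.op (MonoidAlgebra.of ℤ (G ⧸ C) ((h : G ⧸ C))) • d g + d h) ∧
  Submodule.span (MonoidAlgebra ℤ (G ⧸ C))ᵐᵒᵖ (Set.range d) = ⊤ ∧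
  (∀ g : G, σ (d g) = MonoidAlgebra.of ℤ (G ⧸ C) ((g : G ⧸ C)) - 1) ∧
  Set.range σ = {x : MonoidAlgebra ℤ (G ⧸ C) | (x.coeff.sum fun _ n => n) = 0} ∧
  (∀ x : D, σ x = 0 ↔ x ∈ d '' (C : Set G))

/-- A bundled matrix splitting of `G` over `C`. -/
structure MatrixSplitting (G : Type*) [Group G] (C : Subgroup G) [C.Normal] where
  D : Type
  [instAdd : AddCommGroup D]
  [instMod : Module (MonoidAlgebra ℤ (G ⧸ C))ᵐᵒᵖ D]
  d : G → D
  σ : D →ₗ[(MonoidAlgebra ℤ (G ⧸ C))ᵐᵒᵖ] MonoidAlgebra ℤ (G ⧸ C)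
  isSplitting : IsMatrixSplitting C d σ

/-- `R` is a (two-sided) Ore domain: a domain satisfying the right and left Ore
conditions. -/
def IsOreDomain (R : Type*) [Ring R] : Prop :=
  (∀ a b : R, a * b = 0 → a = 0 ∨ b = 0) ∧
  (∀ a b : R, a ≠ 0 → b ≠ 0 → ∃ x y : R, a * x = b * y ∧ a * x ≠ 0) ∧
  (∀ a b : R, a ≠ 0 → b ≠ 0 → ∃ x y : R, x * a = y * b ∧ x * a ≠ 0)

open MonoidAlgebra MulOpposite

namespace Stmt8Aux

variable {G : Type} [Group G] (C : Subgroup G) [C.Normal]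

open Classical in
noncomputable def sec (b : G ⧸ C) : G := if b = 1 then 1 else b.out

@[simp] lemma sec_spec (b : G ⧸ C) : ((sec C b : G) : G ⧸ C) = b := by
  unfold sec
  split_ifs
  · rename_i h; simp [h]
  · exact QuotientGroup.out_eq' b

@[simp] lemma sec_one : sec C 1 = 1 := by
  unfold sec
  simp

lemma mem_of_mk_eq_one {x : G} (h : (x : G ⧸ C) = 1) : x ∈ C :=
  (QuotientGroup.eq_one_iff x).mp h

noncomputable def cOf (g : G) : C :=
  ⟨(sec C (g : G ⧸ C))⁻¹ * g, mem_of_mk_eq_one C (by simp)⟩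

noncomputable def uu (a b : G ⧸ C) : C :=
  ⟨(sec C (a * b))⁻¹ * sec C a * sec C b, mem_of_mk_eq_one C (by simp)⟩

@[simp] lemma uu_one_left (b : G ⧸ C) : uu C 1 b = 1 := by
  apply Subtype.ext
  simp [uu]

@[simp] lemma uu_one_right (a : G ⧸ C) : uu C a 1 = 1 := by
  apply Subtype.ext
  simp [uu]

noncomputable def conjC (b : G ⧸ C) : C →* C where
  toFun c := ⟨(sec C b)⁻¹ * (c : G) * sec C b, by
    simpa using Subgroup.Normal.conj_mem ‹C.Normal› (c : G) c.2 (sec C b)⁻¹⟩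
  map_one' := by ext; simp
  map_mul' x y := by ext; push_cast; group


noncomputable def eps : MonoidAlgebra ℤ (G ⧸ C) →+* ℤ :=
  (MonoidAlgebra.lift ℤ ℤ (G ⧸ C) 1).toRingHom

lemma eps_apply (x : MonoidAlgebra ℤ (G ⧸ C)) : eps C x = x.coeff.sum fun _ n => n := by
  simp [eps, MonoidAlgebra.lift_apply]

@[simp] lemma eps_single (b : G ⧸ C) (n : ℤ) : eps C (single b n) = n := by
  simp [eps, MonoidAlgebra.lift_single]

@[simp] lemma eps_del (t : G ⧸ C) : eps C (single t 1 - 1) = 0 := by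
  rw [map_sub, map_one, eps_single]
  ring

noncomputable def VV : Submodule (MonoidAlgebra ℤ (G ⧸ C))ᵐᵒᵖ (MonoidAlgebra ℤ (G ⧸ C)) where
  carrier := {x | eps C x = 0}
  add_mem' := by
    intro a b ha hb
    simp only [Set.mem_setOf_eq, map_add] at *
    rw [ha, hb]; ring
  zero_mem' := by simp
  smul_mem' := by
    intro r x hx
    simp only [Set.mem_setOf_eq] at *
    have : r • x = x * r.unop := rfl
    rw [this, map_mul, hx, zero_mul]

lemma mem_VV {x : MonoidAlgebra ℤ (G ⧸ C)} : x ∈ VV C ↔ eps C x = 0 := Iff.rfl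

noncomputable def jj : MonoidAlgebra ℤ (G ⧸ C) →+ MonoidAlgebra ℤ (G ⧸ C) where
  toFun x := x - eps C x • (1 : MonoidAlgebra ℤ (G ⧸ C))
  map_zero' := by simp
  map_add' x y := by
    simp only [map_add, add_smul]
    abel

lemma jj_single (b : G ⧸ C) (n : ℤ) :
    jj C (single b n) = n • ((single b 1 : MonoidAlgebra ℤ (G ⧸ C)) - 1) := by
  have h : (single b n : MonoidAlgebra ℤ (G ⧸ C)) = n • single b 1 := by
    rw [MonoidAlgebra.smul_single, smul_eq_mul, mul_one]
  have h2 : jj C (single b n) = single b n - n • 1 := by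
    simp [jj]
  rw [h2, h, smul_sub]

lemma jj_of_ker {x : MonoidAlgebra ℤ (G ⧸ C)} (hx : eps C x = 0) : jj C x = x := by
  simp [jj, hx]

lemma addHom_eq_on_ker {M : Type*} [AddCommGroup M]
    {f g : MonoidAlgebra ℤ (G ⧸ C) →+ M}
    (h : ∀ t : G ⧸ C, f (single t 1 - 1) = g (single t 1 - 1))
    {x : MonoidAlgebra ℤ (G ⧸ C)} (hx : eps C x = 0) : f x = g x := by
  have key : f.comp (jj C) = g.comp (jj C) := by
    refine MonoidAlgebra.addMonoidHom_ext fun b n => ?_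
    show f (jj C (single b n)) = g (jj C (single b n))
    rw [jj_single, map_zsmul, map_zsmul, h]
  have := DFunLike.congr_fun key x
  simpa [AddMonoidHom.comp_apply, jj_of_ker C hx] using this


section Habel

variable (habel : ∀ x ∈ C, ∀ y ∈ C, x * y = y * x)

@[reducible]
def commGroupC : CommGroup C :=
  { (inferInstance : Group C) with
    mul_comm := fun a b => Subtype.ext (habel a a.2 b b.2) }

@[reducible]
def addCommGroupAdditiveC : AddCommGroup (Additive C) :=
  letI := commGroupC C habel
  Additive.addCommGroup

lemma mulC_comm (habel : ∀ x ∈ C, ∀ y ∈ C, x * y = y * x) (a b : C) : a * b = b * a := Subtype.ext (habel a a.2 b b.2)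

noncomputable def conjA (b : G ⧸ C) : Additive C →+ Additive C :=
  MonoidHom.toAdditive (conjC C b)

@[simp] lemma conjA_ofMul (b : G ⧸ C) (c : C) :
    conjA C b (Additive.ofMul c) = Additive.ofMul (conjC C b c) := rfl

lemma conj_conj (habel : ∀ x ∈ C, ∀ y ∈ C, x * y = y * x) (a b : G ⧸ C) (c : C) :
    conjC C b (conjC C a c) = conjC C (a * b) c := by
  have hw : sec C a * sec C b = sec C (a * b) * (uu C a b : G) := by
    show _ = _ * ((sec C (a * b))⁻¹ * sec C a * sec C b)
    group
  have hy : ((conjC C (a * b) c : C) : G) = (sec C (a * b))⁻¹ * (c : G) * sec C (a * b) := rfl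
  have hcomm : ((uu C a b : C) : G) * (conjC C (a * b) c : G) =
      ((conjC C (a * b) c : C) : G) * (uu C a b : G) := by
    have := mulC_comm C habel (uu C a b) (conjC C (a * b) c)
    exact congrArg Subtype.val this
  apply Subtype.ext
  show (sec C b)⁻¹ * ((sec C a)⁻¹ * (c : G) * sec C a) * sec C b = _
  have h1 : (sec C b)⁻¹ * ((sec C a)⁻¹ * (c : G) * sec C a) * sec C b =
      (sec C a * sec C b)⁻¹ * (c : G) * (sec C a * sec C b) := by group
  rw [h1, hw]
  show _ = (sec C (a * b))⁻¹ * (c : G) * sec C (a * b)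
  rw [mul_inv_rev]
  calc (uu C a b : G)⁻¹ * (sec C (a * b))⁻¹ * (c : G) * (sec C (a * b) * (uu C a b : G))
      = (uu C a b : G)⁻¹ * (((sec C (a * b))⁻¹ * (c : G) * sec C (a * b)) * (uu C a b : G)) := by
        group
    _ = (uu C a b : G)⁻¹ * ((uu C a b : G) * ((sec C (a * b))⁻¹ * (c : G) * sec C (a * b))) := by
        rw [← hy, ← hcomm, hy]
    _ = (sec C (a * b))⁻¹ * (c : G) * sec C (a * b) := by group

noncomputable def Fb (b : G ⧸ C) : MonoidAlgebra ℤ (G ⧸ C) →+ Additive C :=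
  letI := addCommGroupAdditiveC C habel
  (Finsupp.liftAddHom fun a => zmultiplesHom (Additive C) (Additive.ofMul (uu C a b))).comp
    (MonoidAlgebra.coeffAddEquiv (R := ℤ) (M := G ⧸ C)).toAddMonoidHom

lemma Fb_single (a b : G ⧸ C) (n : ℤ) :
    Fb C habel b (single a n) = n • Additive.ofMul (uu C a b) := by
  letI := addCommGroupAdditiveC C habel
  show Finsupp.liftAddHom _ (Finsupp.single a n) = _
  rw [Finsupp.liftAddHom_apply, Finsupp.sum_single_index]
  · rfl
  · simp

lemma Fb_del (t b : G ⧸ C) :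
    Fb C habel b (single t 1 - 1) = Additive.ofMul (uu C t b) := by
  rw [map_sub, MonoidAlgebra.one_def, Fb_single, Fb_single, uu_one_left]
  simp

lemma Fb_one (x : MonoidAlgebra ℤ (G ⧸ C)) : Fb C habel 1 x = 0 := by
  letI := addCommGroupAdditiveC C habel
  show Finsupp.liftAddHom _ x.coeff = _
  rw [Finsupp.liftAddHom_apply]
  have : ∀ a ∈ x.coeff.support, (zmultiplesHom (Additive C) (Additive.ofMul (uu C a 1))) (x.coeff a) = 0 := by
    intro a _
    simp [uu_one_right]
  exact Finset.sum_eq_zero this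

lemma uu_cocycle (habel : ∀ x ∈ C, ∀ y ∈ C, x * y = y * x) (t a b : G ⧸ C) :
    conjC C b (uu C t a) * (uu C (t * a) b * (uu C a b)⁻¹) = uu C t (a * b) := by
  have key : (uu C (t * a) b : G) * (conjC C b (uu C t a) : G) =
      (uu C t (a * b) : G) * (uu C a b : G) := by
    show (sec C (t * a * b))⁻¹ * sec C (t * a) * sec C b *
        ((sec C b)⁻¹ * ((sec C (t * a))⁻¹ * sec C t * sec C a) * sec C b) =
      (sec C (t * (a * b)))⁻¹ * sec C t * sec C (a * b) *
        ((sec C (a * b))⁻¹ * sec C a * sec C b)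
    rw [mul_assoc t a b]
    group
  have key' : uu C (t * a) b * conjC C b (uu C t a) = uu C t (a * b) * uu C a b :=
    Subtype.ext key
  have hsw : conjC C b (uu C t a) * uu C (t * a) b = uu C (t * a) b * conjC C b (uu C t a) :=
    mulC_comm C habel _ _
  calc conjC C b (uu C t a) * (uu C (t * a) b * (uu C a b)⁻¹)
      = (uu C (t * a) b * conjC C b (uu C t a)) * (uu C a b)⁻¹ := by
        rw [← hsw]; group
    _ = (uu C t (a * b) * uu C a b) * (uu C a b)⁻¹ := by rw [key']
    _ = uu C t (a * b) := by group

lemma Fb_cocycle (a b : G ⧸ C) {x : MonoidAlgebra ℤ (G ⧸ C)} (hx : eps C x = 0) :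
    conjA C b (Fb C habel a x) + Fb C habel b (x * single a 1) = Fb C habel (a * b) x := by
  letI := addCommGroupAdditiveC C habel
  have := addHom_eq_on_ker C
    (f := (conjA C b).comp (Fb C habel a) +
      (Fb C habel b).comp (AddMonoidHom.mulRight (single a 1)))
    (g := Fb C habel (a * b)) ?_ hx
  · simpa using this
  · intro t
    simp only [AddMonoidHom.add_apply, AddMonoidHom.comp_apply, AddMonoidHom.mulRight_apply]
    rw [Fb_del, Fb_del]
    have hmul : ((single t 1 - 1 : MonoidAlgebra ℤ (G ⧸ C)) * single a 1)
        = single (t * a) 1 - single a 1 := by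
      simp [sub_mul, MonoidAlgebra.single_mul_single]
    rw [hmul, map_sub, Fb_single, Fb_single, conjA_ofMul]
    have : Additive.ofMul (conjC C b (uu C t a)) +
        ((1 : ℤ) • Additive.ofMul (uu C (t * a) b) - (1 : ℤ) • Additive.ofMul (uu C a b)) =
        Additive.ofMul (conjC C b (uu C t a) * (uu C (t * a) b * (uu C a b)⁻¹)) := by
      simp [one_zsmul, ← ofMul_mul, ← ofMul_inv, sub_eq_add_neg]
    rw [this, uu_cocycle C habel]


noncomputable def Ee (b : G ⧸ C) : AddMonoid.End (Additive C × VV C) :=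
  letI := addCommGroupAdditiveC C habel
  { toFun := fun p => (conjA C b p.1 + Fb C habel b (p.2 : MonoidAlgebra ℤ (G ⧸ C)),
      ⟨(p.2 : MonoidAlgebra ℤ (G ⧸ C)) * single b 1, by
        rw [← op_smul_eq_mul]
        exact Submodule.smul_mem _ _ p.2.2⟩)
    map_zero' := by
      refine Prod.ext ?_ (Subtype.ext ?_)
      · show conjA C b 0 + Fb C habel b ((0 : VV C) : MonoidAlgebra ℤ (G ⧸ C)) = 0
        simp
      · show ((0 : VV C) : MonoidAlgebra ℤ (G ⧸ C)) * single b 1 = 0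
        simp
    map_add' := fun p q => by
      refine Prod.ext ?_ (Subtype.ext ?_)
      · show conjA C b (p.1 + q.1) + Fb C habel b ((p.2 : MonoidAlgebra ℤ (G ⧸ C)) + (q.2 : MonoidAlgebra ℤ (G ⧸ C))) = _
        rw [map_add, map_add]
        exact add_add_add_comm _ _ _ _
      · show ((p.2 : MonoidAlgebra ℤ (G ⧸ C)) + (q.2 : MonoidAlgebra ℤ (G ⧸ C))) * single b 1 = _
        exact add_mul _ _ _ }

lemma Ee_apply (b : G ⧸ C) (p : Additive C × VV C) :
    Ee C habel b p = (conjA C b p.1 + Fb C habel b (p.2 : MonoidAlgebra ℤ (G ⧸ C)),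
      ⟨(p.2 : MonoidAlgebra ℤ (G ⧸ C)) * single b 1, by
        rw [← op_smul_eq_mul]; exact Submodule.smul_mem _ _ p.2.2⟩) := rfl

noncomputable def Ehm : (G ⧸ C) →* (AddMonoid.End (Additive C × VV C))ᵐᵒᵖ :=
  letI := addCommGroupAdditiveC C habel
  { toFun := fun b => op (Ee C habel b)
    map_one' := by
      show op (Ee C habel 1) = op 1
      refine congrArg op (DFunLike.ext _ _ fun p => ?_)
      rw [Ee_apply]
      refine Prod.ext ?_ (Subtype.ext ?_)
      · show conjA C 1 p.1 + Fb C habel 1 ((p.2 : MonoidAlgebra ℤ (G ⧸ C))) = p.1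
        rw [Fb_one]
        have h1 : conjA C 1 p.1 = p.1 := by
          induction p.1 using Additive.rec with
          | ofMul c =>
            rw [conjA_ofMul]
            congr 1
            apply Subtype.ext
            show (sec C 1)⁻¹ * (c : G) * sec C 1 = (c : G)
            rw [sec_one]
            group
        rw [h1, add_zero]
      · show (p.2 : MonoidAlgebra ℤ (G ⧸ C)) * single 1 1 = (p.2 : MonoidAlgebra ℤ (G ⧸ C))
        rw [← MonoidAlgebra.one_def, mul_one]
    map_mul' := fun a b => by
      show op (Ee C habel (a * b)) = op (Ee C habel b * Ee C habel a)
      refine congrArg op (DFunLike.ext _ _ fun p => ?_)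
      have hEb : (Ee C habel b * Ee C habel a) p = Ee C habel b (Ee C habel a p) := rfl
      rw [hEb, Ee_apply, Ee_apply, Ee_apply]
      refine Prod.ext ?_ (Subtype.ext ?_)
      · show conjA C (a * b) p.1 + Fb C habel (a * b) (p.2 : MonoidAlgebra ℤ (G ⧸ C)) =
          conjA C b (conjA C a p.1 + Fb C habel a (p.2 : MonoidAlgebra ℤ (G ⧸ C))) +
            Fb C habel b ((p.2 : MonoidAlgebra ℤ (G ⧸ C)) * single a 1)
        rw [map_add, add_assoc, Fb_cocycle C habel a b p.2.2]
        congr 1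
        induction p.1 using Additive.rec with
        | ofMul c => rw [conjA_ofMul, conjA_ofMul, conjA_ofMul, conj_conj C habel]
      · show (p.2 : MonoidAlgebra ℤ (G ⧸ C)) * single (a * b) 1 =
          ((p.2 : MonoidAlgebra ℤ (G ⧸ C)) * single a 1) * single b 1
        rw [mul_assoc, MonoidAlgebra.single_mul_single, one_mul] }

noncomputable def lam :=
  letI := addCommGroupAdditiveC C habel
  letI : AddCommGroup (Additive C × VV C) := inferInstance
  letI : Ring (AddMonoid.End (Additive C × VV C)) := inferInstance
  letI : Algebra ℤ ((AddMonoid.End (Additive C × VV C))ᵐᵒᵖ) := inferInstance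
  ((MonoidAlgebra.lift ℤ ((AddMonoid.End (Additive C × VV C))ᵐᵒᵖ) (G ⧸ C)) (Ehm C habel) :
    MonoidAlgebra ℤ (G ⧸ C) →ₐ[ℤ] (AddMonoid.End (Additive C × VV C))ᵐᵒᵖ)

noncomputable def EE (x : MonoidAlgebra ℤ (G ⧸ C)) :=
  (lam C habel x).unop

lemma EE_one_apply (p : Additive C × VV C) : EE C habel 1 p = p := by
  letI := addCommGroupAdditiveC C habel
  have h : lam C habel 1 = 1 := map_one _
  show (lam C habel 1).unop p = p
  rw [h]
  rfl

lemma EE_mul_apply (x y : MonoidAlgebra ℤ (G ⧸ C)) (p : Additive C × VV C) :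
    EE C habel (x * y) p = EE C habel y (EE C habel x p) := by
  letI := addCommGroupAdditiveC C habel
  have h : lam C habel (x * y) = lam C habel x * lam C habel y := map_mul _ _ _
  show (lam C habel (x * y)).unop p = _
  rw [h]
  rfl

lemma EE_zero_apply (p : Additive C × VV C) : EE C habel 0 p = 0 := by
  letI := addCommGroupAdditiveC C habel
  have h : lam C habel 0 = 0 := map_zero _
  show (lam C habel 0).unop p = 0
  rw [h]
  rfl

lemma EE_add_apply (x y : MonoidAlgebra ℤ (G ⧸ C)) (p : Additive C × VV C) :
    EE C habel (x + y) p = EE C habel x p + EE C habel y p := by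
  letI := addCommGroupAdditiveC C habel
  have h : lam C habel (x + y) = lam C habel x + lam C habel y := map_add _ _ _
  show (lam C habel (x + y)).unop p = _
  rw [h]
  rfl

lemma EE_zsmul_apply (n : ℤ) (x : MonoidAlgebra ℤ (G ⧸ C)) (p : Additive C × VV C) :
    EE C habel (n • x) p = n • EE C habel x p := by
  letI := addCommGroupAdditiveC C habel
  have h : lam C habel (n • x) = n • lam C habel x := map_smul (lam C habel) n x
  show (lam C habel (n • x)).unop p = _
  rw [h]
  rfl

lemma EE_of (b : G ⧸ C) : EE C habel (single b 1) = Ee C habel b := by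
  letI := addCommGroupAdditiveC C habel
  letI : AddCommGroup (Additive C × VV C) := inferInstance
  letI : Ring (AddMonoid.End (Additive C × VV C)) := inferInstance
  letI : Algebra ℤ ((AddMonoid.End (Additive C × VV C))ᵐᵒᵖ) := inferInstance
  have h : lam C habel (MonoidAlgebra.of ℤ (G ⧸ C) b) = Ehm C habel b :=
    MonoidAlgebra.lift_of _ _
  show (lam C habel (single b 1)).unop = _
  rw [show (single b 1 : MonoidAlgebra ℤ (G ⧸ C)) = MonoidAlgebra.of ℤ (G ⧸ C) b from rfl, h]
  rfl

noncomputable def modD :=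
  letI := addCommGroupAdditiveC C habel
  show Module (MonoidAlgebra ℤ (G ⧸ C))ᵐᵒᵖ (Additive C × VV C) from
  { smul := fun r p => EE C habel r.unop p
    one_smul := fun p => by
      show EE C habel (unop 1) p = p
      rw [unop_one]
      exact EE_one_apply C habel p
    mul_smul := fun r s p => by
      show EE C habel (unop (r * s)) p = EE C habel r.unop (EE C habel s.unop p)
      rw [unop_mul]
      exact EE_mul_apply C habel _ _ p
    smul_add := fun r p q => (EE C habel r.unop).map_add p q
    smul_zero := fun r => (EE C habel r.unop).map_zero
    add_smul := fun r s p => by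
      show EE C habel (unop (r + s)) p = EE C habel r.unop p + EE C habel s.unop p
      rw [unop_add]
      exact EE_add_apply C habel _ _ p
    zero_smul := fun p => by
      show EE C habel (unop (0 : (MonoidAlgebra ℤ (G ⧸ C))ᵐᵒᵖ)) p = 0
      rw [unop_zero]
      exact EE_zero_apply C habel p }


lemma EE_snd (x : MonoidAlgebra ℤ (G ⧸ C)) (p : Additive C × VV C) :
    ((EE C habel x p).2 : MonoidAlgebra ℤ (G ⧸ C)) =
      (p.2 : MonoidAlgebra ℤ (G ⧸ C)) * x := by
  letI := addCommGroupAdditiveC C habel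
  let f : MonoidAlgebra ℤ (G ⧸ C) →+ MonoidAlgebra ℤ (G ⧸ C) :=
    { toFun := fun y => ((EE C habel y p).2 : MonoidAlgebra ℤ (G ⧸ C))
      map_zero' := by
        show ((EE C habel 0 p).2 : MonoidAlgebra ℤ (G ⧸ C)) = 0
        rw [EE_zero_apply]; rfl
      map_add' := fun a b => by
        show ((EE C habel (a + b) p).2 : MonoidAlgebra ℤ (G ⧸ C)) =
          ((EE C habel a p).2 : MonoidAlgebra ℤ (G ⧸ C)) +
          ((EE C habel b p).2 : MonoidAlgebra ℤ (G ⧸ C))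
        rw [EE_add_apply]; rfl }
  let g : MonoidAlgebra ℤ (G ⧸ C) →+ MonoidAlgebra ℤ (G ⧸ C) :=
    AddMonoidHom.mulLeft ((p.2 : MonoidAlgebra ℤ (G ⧸ C)))
  have key : f = g := by
    refine MonoidAlgebra.addMonoidHom_ext fun b n => ?_
    have hs : (single b n : MonoidAlgebra ℤ (G ⧸ C)) = n • single b 1 := by
      rw [MonoidAlgebra.smul_single, smul_eq_mul, mul_one]
    show f (single b n) = g (single b n)
    rw [hs, map_zsmul, map_zsmul]
    have hf1 : f (single b 1) = (p.2 : MonoidAlgebra ℤ (G ⧸ C)) * single b 1 := by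
      show ((EE C habel (single b 1) p).2 : MonoidAlgebra ℤ (G ⧸ C)) = _
      rw [EE_of, Ee_apply]
    have hg1 : g (single b 1) = (p.2 : MonoidAlgebra ℤ (G ⧸ C)) * single b 1 := rfl
    rw [hf1, hg1]
  exact DFunLike.congr_fun key x

noncomputable def sig :=
  letI := addCommGroupAdditiveC C habel
  letI := modD C habel
  show (Additive C × VV C) →ₗ[(MonoidAlgebra ℤ (G ⧸ C))ᵐᵒᵖ] MonoidAlgebra ℤ (G ⧸ C) from
  { toFun := fun p => (p.2 : MonoidAlgebra ℤ (G ⧸ C))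
    map_add' := fun p q => rfl
    map_smul' := fun r p => by
      show ((EE C habel r.unop p).2 : MonoidAlgebra ℤ (G ⧸ C)) =
        (RingHom.id ((MonoidAlgebra ℤ (G ⧸ C))ᵐᵒᵖ)) r • (p.2 : MonoidAlgebra ℤ (G ⧸ C))
      rw [EE_snd]
      rfl }

end Habel

noncomputable def dd (g : G) : Additive C × VV C :=
  (Additive.ofMul (cOf C g),
    ⟨single ((g : G ⧸ C)) 1 - 1, (mem_VV C).mpr (eps_del C _)⟩)

lemma cOf_mem (c : C) : cOf C (c : G) = c := by
  apply Subtype.ext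
  show (sec C ((c : G) : G ⧸ C))⁻¹ * (c : G) = (c : G)
  rw [(QuotientGroup.eq_one_iff (c : G)).mpr c.2, sec_one]
  group

lemma mk_mem_one (c : C) : (((c : G)) : G ⧸ C) = 1 :=
  (QuotientGroup.eq_one_iff (c : G)).mpr c.2

lemma dd_mem (c : C) :
    dd C (c : G) = (Additive.ofMul c, 0) := by
  unfold dd
  refine Prod.ext ?_ (Subtype.ext ?_)
  · show Additive.ofMul (cOf C (c : G)) = Additive.ofMul c
    rw [cOf_mem]
  · show single (((c : G)) : G ⧸ C) 1 - 1 = (0 : MonoidAlgebra ℤ (G ⧸ C))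
    rw [mk_mem_one, ← MonoidAlgebra.one_def, sub_self]

lemma dd_sec (b : G ⧸ C) :
    dd C (sec C b) = ((0 : Additive C),
      ⟨single b 1 - 1, (mem_VV C).mpr (eps_del C _)⟩) := by
  unfold dd
  refine Prod.ext ?_ (Subtype.ext ?_)
  · show Additive.ofMul (cOf C (sec C b)) = 0
    have : cOf C (sec C b) = 1 := by
      apply Subtype.ext
      show (sec C ((sec C b : G) : G ⧸ C))⁻¹ * sec C b = 1
      rw [sec_spec]
      group
    rw [this]
    rfl
  · show single ((sec C b : G) : G ⧸ C) 1 - 1 = single b 1 - 1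
    rw [sec_spec]

lemma cOf_mul (habel : ∀ x ∈ C, ∀ y ∈ C, x * y = y * x) (g h : G) :
    cOf C (g * h) =
      conjC C (h : G ⧸ C) (cOf C g) * uu C (g : G ⧸ C) (h : G ⧸ C) * cOf C h := by
  have h1 : cOf C (g * h) =
      uu C (g : G ⧸ C) (h : G ⧸ C) * conjC C (h : G ⧸ C) (cOf C g) * cOf C h := by
    apply Subtype.ext
    show (sec C ((g * h : G) : G ⧸ C))⁻¹ * (g * h) =
      ((sec C ((g : G ⧸ C) * (h : G ⧸ C)))⁻¹ * sec C (g : G ⧸ C) * sec C (h : G ⧸ C)) *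
        ((sec C (h : G ⧸ C))⁻¹ * ((sec C (g : G ⧸ C))⁻¹ * g) *
          sec C (h : G ⧸ C)) *
        ((sec C (h : G ⧸ C))⁻¹ * h)
    rw [show ((g * h : G) : G ⧸ C) = (g : G ⧸ C) * (h : G ⧸ C) from QuotientGroup.mk_mul _ _ _]
    group
  rw [h1, mulC_comm C habel (uu C (g : G ⧸ C) (h : G ⧸ C)) (conjC C (h : G ⧸ C) (cOf C g))]

end Stmt8Aux

open MonoidAlgebra MulOpposite in
theorem Stmt8Aux.stmt8_main {G : Type} [Group G] (C : Subgroup G) [C.Normal]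
    (habel : ∀ x ∈ C, ∀ y ∈ C, x * y = y * x) :
    Nonempty (MatrixSplitting G C) := by
  classical
  letI := addCommGroupAdditiveC C habel
  letI := modD C habel
  have hsmul : ∀ (x : MonoidAlgebra ℤ (G ⧸ C)) (p : Additive C × VV C),
      (op x) • p = EE C habel x p := fun _ _ => rfl
  refine ⟨⟨Additive C × VV C, dd C, sig C habel, ?_, ?_, ?_, ?_, ?_, ?_⟩⟩
  · -- injectivity
    intro g h heq
    simp only [Prod.mk.injEq] at heq
    obtain ⟨h1, h2⟩ := heq
    have h3 : cOf C g = cOf C h := by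
      have := congrArg Prod.fst h2
      simpa [dd] using this
    have h4 : (sec C (g : G ⧸ C))⁻¹ * g = (sec C (h : G ⧸ C))⁻¹ * h :=
      congrArg Subtype.val h3
    rw [h1] at h4
    exact mul_left_cancel h4
  · -- cocycle
    intro g h
    rw [hsmul, MonoidAlgebra.of_apply, EE_of, Ee_apply]
    refine Prod.ext ?_ (Subtype.ext ?_)
    · show Additive.ofMul (cOf C (g * h)) =
        (conjA C (h : G ⧸ C) (Additive.ofMul (cOf C g)) +
          Fb C habel (h : G ⧸ C) (single ((g : G ⧸ C)) 1 - 1)) +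
        Additive.ofMul (cOf C h)
      rw [conjA_ofMul, Fb_del, ← ofMul_mul, ← ofMul_mul]
      exact congrArg Additive.ofMul (cOf_mul C habel g h)
    · show single (((g * h : G)) : G ⧸ C) 1 - 1 =
        ((single ((g : G ⧸ C)) 1 - 1) * single ((h : G ⧸ C)) 1) + (single ((h : G ⧸ C)) 1 - 1)
      rw [show (((g * h : G)) : G ⧸ C) = (g : G ⧸ C) * (h : G ⧸ C) from
        QuotientGroup.mk_mul _ _ _]
      rw [sub_mul, MonoidAlgebra.single_mul_single]
      simp only [one_mul, mul_one]
      abel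
  · -- span
    set W := Submodule.span (MonoidAlgebra ℤ (G ⧸ C))ᵐᵒᵖ (Set.range (dd C)) with hW
    have eps_jj : ∀ x : MonoidAlgebra ℤ (G ⧸ C), eps C (jj C x) = 0 := by
      intro x
      show eps C (x - eps C x • 1) = 0
      rw [map_sub, map_zsmul, map_one, smul_eq_mul, mul_one, sub_self]
    let j : MonoidAlgebra ℤ (G ⧸ C) →+ (Additive C × VV C) :=
      { toFun := fun x => ((0 : Additive C), ⟨jj C x, (mem_VV C).mpr (eps_jj x)⟩)
        map_zero' := by
          refine Prod.ext rfl (Subtype.ext ?_)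
          show jj C 0 = 0
          exact map_zero _
        map_add' := fun a b => by
          refine Prod.ext ?_ (Subtype.ext ?_)
          · show (0 : Additive C) = 0 + 0
            rw [add_zero]
          · show jj C (a + b) = jj C a + jj C b
            exact map_add _ _ _ }
    have hjW : ∀ x : MonoidAlgebra ℤ (G ⧸ C), j x ∈ W := by
      have key : (W.mkQ.toAddMonoidHom.comp j) = 0 := by
        refine MonoidAlgebra.addMonoidHom_ext fun b n => ?_
        show W.mkQ (j (single b n)) = 0
        have h1 : j (single b n) = n • dd C (sec C b) := by
          refine Prod.ext ?_ (Subtype.ext ?_)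
          · show (0 : Additive C) = (n • dd C (sec C b)).1
            rw [dd_sec]
            show (0 : Additive C) = n • (0 : Additive C)
            rw [smul_zero]
          · show jj C (single b n) = (((n • dd C (sec C b)).2 : VV C) : MonoidAlgebra ℤ (G ⧸ C))
            rw [jj_single, dd_sec]
            rfl
        rw [h1, map_zsmul]
        have h2 : W.mkQ (dd C (sec C b)) = 0 := by
          rw [Submodule.mkQ_apply, Submodule.Quotient.mk_eq_zero]
          exact Submodule.subset_span ⟨sec C b, rfl⟩
        rw [h2, smul_zero]
      intro x
      have := DFunLike.congr_fun key x
      simp only [AddMonoidHom.comp_apply, LinearMap.toAddMonoidHom_coe,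
        Submodule.mkQ_apply, AddMonoidHom.zero_apply] at this
      exact (Submodule.Quotient.mk_eq_zero W).mp this
    rw [eq_top_iff]
    rintro p -
    have hp2 : eps C ((p.2 : VV C) : MonoidAlgebra ℤ (G ⧸ C)) = 0 := (mem_VV C).mp p.2.2
    have hrepr : p = dd C ((Additive.toMul p.1 : C) : G) + j ((p.2 : VV C) : MonoidAlgebra ℤ (G ⧸ C)) := by
      rw [dd_mem]
      refine Prod.ext ?_ (Subtype.ext ?_)
      · show p.1 = Additive.ofMul (Additive.toMul p.1) + 0
        rw [add_zero]
        rfl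
      · show ((p.2 : VV C) : MonoidAlgebra ℤ (G ⧸ C)) =
          0 + jj C ((p.2 : VV C) : MonoidAlgebra ℤ (G ⧸ C))
        rw [zero_add, jj_of_ker C hp2]
    rw [hrepr]
    exact W.add_mem (Submodule.subset_span ⟨_, rfl⟩) (hjW _)
  · -- sigma of dd
    intro g
    show single ((g : G ⧸ C)) 1 - 1 = MonoidAlgebra.of ℤ (G ⧸ C) ((g : G ⧸ C)) - 1
    rw [MonoidAlgebra.of_apply]
  · -- range
    ext x
    constructor
    · rintro ⟨p, rfl⟩
      show ((((p.2 : VV C) : MonoidAlgebra ℤ (G ⧸ C))).coeff.sum fun _ n => n) = 0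
      rw [← eps_apply]
      exact (mem_VV C).mp p.2.2
    · intro hx
      refine ⟨((0 : Additive C), ⟨x, (mem_VV C).mpr ?_⟩), rfl⟩
      rw [eps_apply]
      exact hx
  · -- kernel
    intro p
    constructor
    · intro hp
      have hp' : ((p.2 : VV C) : MonoidAlgebra ℤ (G ⧸ C)) = 0 := hp
      refine ⟨((Additive.toMul p.1 : C) : G), (Additive.toMul p.1 : C).2, ?_⟩
      rw [dd_mem]
      refine Prod.ext ?_ (Subtype.ext ?_)
      · rfl
      · exact hp'.symm
    · rintro ⟨g', hg', rfl⟩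
      show (single ((g' : G ⧸ C)) 1 - 1 : MonoidAlgebra ℤ (G ⧸ C)) = 0
      rw [(QuotientGroup.eq_one_iff g').mpr hg', ← MonoidAlgebra.one_def, sub_self]


theorem stmt8 {G : Type} [Group G] (C : Subgroup G) [C.Normal]
    (habel : ∀ x ∈ C, ∀ y ∈ C, x * y = y * x) :
    Nonempty (MatrixSplitting G C) :=
  Stmt8Aux.stmt8_main C habel
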